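/- Let Z_1, Z_2, Z_3 ∈ ℝ³ be non-collinear and let d_1, d_2, d_3 ≥ 0. Let D_i = {W ∈ ℝ³ : ‖W − Z_i‖ ≤ d_i} be the closed measurement balls and let R_{100} be the closure of D_1 \ (D_2 ∪ D_3). If R_{100} is nonempty, then R_{100} is a connected subset of ℝ³. -/

import Mathlib

open scoped RealInnerProductSpace
open Metric Set

noncomputable section R100Aux

abbrev E3 : Type := EuclideanSpace ℝ (Fin 3)

/-- The point with coordinates `x, y, z` in the affine frame with origin `Z₁` and
orthonormal directions `e 0, e 1, e 2`. -/
def R100pt (e : OrthonormalBasis (Fin 3) ℝ E3) (Z₁ : E3) (x y z : ℝ) : E3 :=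
  Z₁ + (x • e 0 + y • e 1 + z • e 2)

/-- The region `D₁ \ (D₂ ∪ D₃)` in adapted coordinates. -/
def R100set (e : OrthonormalBasis (Fin 3) ℝ E3) (Z₁ : E3) (d₁ d₂ d₃ r b₁ b₂ : ℝ) : Set E3 :=
  Metric.closedBall Z₁ d₁ \
    (Metric.closedBall (Z₁ + r • e 0) d₂ ∪ Metric.closedBall (Z₁ + (b₁ • e 0 + b₂ • e 1)) d₃)

lemma R100_normsq (e : OrthonormalBasis (Fin 3) ℝ E3) (x y z : ℝ) :
    ‖x • e 0 + y • e 1 + z • e 2‖ ^ 2 = x ^ 2 + y ^ 2 + z ^ 2 := by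
  have h := e.orthonormal
  rw [orthonormal_iff_ite] at h
  rw [← real_inner_self_eq_norm_sq]
  simp only [inner_add_left, inner_add_right, real_inner_smul_left, real_inner_smul_right, h]
  simp
  ring

lemma R100_mem (e : OrthonormalBasis (Fin 3) ℝ E3) (Z₁ : E3) (d₁ d₂ d₃ r b₁ b₂ : ℝ)
    (hd₁ : 0 ≤ d₁) (hd₂ : 0 ≤ d₂) (hd₃ : 0 ≤ d₃) (x y z : ℝ) :
    R100pt e Z₁ x y z ∈ R100set e Z₁ d₁ d₂ d₃ r b₁ b₂ ↔
      (x ^ 2 + y ^ 2 + z ^ 2 ≤ d₁ ^ 2 ∧ d₂ ^ 2 < (x - r) ^ 2 + y ^ 2 + z ^ 2 ∧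
        d₃ ^ 2 < (x - b₁) ^ 2 + (y - b₂) ^ 2 + z ^ 2) := by
  have h1 : R100pt e Z₁ x y z - Z₁ = x • e 0 + y • e 1 + z • e 2 := by
    simp [R100pt]
  have h2 : R100pt e Z₁ x y z - (Z₁ + r • e 0) = (x - r) • e 0 + y • e 1 + z • e 2 := by
    simp only [R100pt, sub_smul]
    abel
  have h3 : R100pt e Z₁ x y z - (Z₁ + (b₁ • e 0 + b₂ • e 1)) =
      (x - b₁) • e 0 + (y - b₂) • e 1 + z • e 2 := by
    simp only [R100pt, sub_smul]
    abel
  have key : ∀ (u : E3) (d : ℝ), 0 ≤ d → ((‖u‖ ≤ d ↔ ‖u‖ ^ 2 ≤ d ^ 2) ∧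
      (d < ‖u‖ ↔ d ^ 2 < ‖u‖ ^ 2)) := by
    intro u d hd
    constructor
    · constructor <;> intro h <;> nlinarith [norm_nonneg u]
    · constructor <;> intro h <;> nlinarith [norm_nonneg u]
  simp only [R100set, Set.mem_diff, Set.mem_union, Metric.mem_closedBall, dist_eq_norm,
    not_or, not_le, h1, h2, h3]
  rw [(key _ _ hd₁).1, (key _ _ hd₂).2, (key _ _ hd₃).2, R100_normsq, R100_normsq, R100_normsq]

lemma R100_joined_of_path {A : Set E3} {f : ℝ → E3} (hf : Continuous f)
    (hmem : ∀ t, 0 ≤ t → t ≤ 1 → f t ∈ A) :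
    JoinedIn A (f 0) (f 1) := by
  apply JoinedIn.ofLine hf.continuousOn rfl rfl
  rintro w ⟨t, ht, rfl⟩
  exact hmem t ht.1 ht.2

lemma R100pt_continuous (e : OrthonormalBasis (Fin 3) ℝ E3) (Z₁ : E3)
    {fx fy fz : ℝ → ℝ} (hx : Continuous fx) (hy : Continuous fy) (hz : Continuous fz) :
    Continuous fun t => R100pt e Z₁ (fx t) (fy t) (fz t) := by
  unfold R100pt
  exact continuous_const.add (((hx.smul continuous_const).add (hy.smul continuous_const)).add
    (hz.smul continuous_const))

set_option maxHeartbeats 1600000 in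
/-- Stage 1 and 2: from any point of the region, one can travel inside the region to the
"bottom point" `(x, -√(d₁² - x²), 0)` with the same first coordinate. -/
lemma R100_to_bottom (e : OrthonormalBasis (Fin 3) ℝ E3) (Z₁ : E3) (d₁ d₂ d₃ r b₁ b₂ : ℝ)
    (hd₁ : 0 ≤ d₁) (hd₂ : 0 ≤ d₂) (hd₃ : 0 ≤ d₃) (hb₂ : 0 < b₂) {x y z : ℝ}
    (hmem : R100pt e Z₁ x y z ∈ R100set e Z₁ d₁ d₂ d₃ r b₁ b₂) :
    JoinedIn (R100set e Z₁ d₁ d₂ d₃ r b₁ b₂) (R100pt e Z₁ x y z)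
      (R100pt e Z₁ x (-Real.sqrt (d₁ ^ 2 - x ^ 2)) 0) := by
  rw [R100_mem e Z₁ d₁ d₂ d₃ r b₁ b₂ hd₁ hd₂ hd₃] at hmem
  obtain ⟨h1, h2, h3⟩ := hmem
  obtain ⟨σ, hσ, hσz⟩ : ∃ σ : ℝ, (σ = -1 ∨ σ = 1) ∧ 0 ≤ σ * z := by
    rcases lt_or_ge z 0 with h | h
    · exact ⟨-1, Or.inl rfl, by nlinarith⟩
    · exact ⟨1, Or.inr rfl, by nlinarith⟩
  have hσσ : σ ^ 2 = 1 := by rcases hσ with h | h <;> rw [h] <;> norm_num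
  have hzR : z ^ 2 ≤ d₁ ^ 2 - x ^ 2 - y ^ 2 := by nlinarith
  have hR0 : (0:ℝ) ≤ d₁ ^ 2 - x ^ 2 - y ^ 2 := by nlinarith
  set R : ℝ := d₁ ^ 2 - x ^ 2 - y ^ 2 with hRdef
  clear_value R
  set s : ℝ := Real.sqrt R with hsdef
  have hs2 : s ^ 2 = R := Real.sq_sqrt hR0
  have hs0 : 0 ≤ s := Real.sqrt_nonneg R
  -- Stage 1 : raise |z| to reach the sphere of radius d₁
  have J1 : JoinedIn (R100set e Z₁ d₁ d₂ d₃ r b₁ b₂) (R100pt e Z₁ x y z)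
      (R100pt e Z₁ x y (σ * s)) := by
    have hc : Continuous fun t : ℝ => R100pt e Z₁ x y ((1 - t) * z + t * (σ * s)) :=
      R100pt_continuous e Z₁ continuous_const continuous_const (by fun_prop)
    have hmem : ∀ t : ℝ, 0 ≤ t → t ≤ 1 →
        R100pt e Z₁ x y ((1 - t) * z + t * (σ * s)) ∈ R100set e Z₁ d₁ d₂ d₃ r b₁ b₂ := by
      intro t ht0 ht1
      rw [R100_mem e Z₁ d₁ d₂ d₃ r b₁ b₂ hd₁ hd₂ hd₃]
      set w : ℝ := (1 - t) * z + t * (σ * s) with hwdef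
      have hw1 : w ^ 2 ≤ R := by
        have hσw : σ * w = (1 - t) * (σ * z) + t * s := by
          rcases hσ with h | h <;> simp only [hwdef, h] <;> ring
        have h1' : σ * z ≤ s := by nlinarith
        have h2' : 0 ≤ σ * w := by nlinarith
        have h3' : σ * w ≤ s := by nlinarith
        nlinarith
      have hw2 : z ^ 2 ≤ w ^ 2 := by
        have hσw : σ * w = (1 - t) * (σ * z) + t * s := by
          rcases hσ with h | h <;> simp only [hwdef, h] <;> ring
        have h1' : σ * z ≤ s := by nlinarith
        have h2' : σ * z ≤ σ * w := by nlinarith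
        nlinarith
      refine ⟨by nlinarith, by nlinarith, by nlinarith⟩
    simpa using R100_joined_of_path hc hmem
  -- Stage 2 : slide y down to the bottom of the sphere
  set P : ℝ := d₁ ^ 2 - x ^ 2 with hPdef
  have hyP : y ^ 2 ≤ P := by simp only [hPdef]; nlinarith
  have hP0 : 0 ≤ P := by nlinarith
  set p : ℝ := Real.sqrt P with hpdef
  have hp2 : p ^ 2 = P := Real.sq_sqrt hP0
  have hp0 : 0 ≤ p := Real.sqrt_nonneg P
  have hyp : -p ≤ y := by nlinarith
  have J2 : JoinedIn (R100set e Z₁ d₁ d₂ d₃ r b₁ b₂) (R100pt e Z₁ x y (σ * s))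
      (R100pt e Z₁ x (-p) 0) := by
    have hc : Continuous fun t : ℝ =>
        R100pt e Z₁ x ((1 - t) * y + t * (-p))
          (σ * Real.sqrt (P - ((1 - t) * y + t * (-p)) ^ 2)) :=
      R100pt_continuous e Z₁ continuous_const (by fun_prop) (by fun_prop)
    have hmem : ∀ t : ℝ, 0 ≤ t → t ≤ 1 →
        R100pt e Z₁ x ((1 - t) * y + t * (-p))
          (σ * Real.sqrt (P - ((1 - t) * y + t * (-p)) ^ 2)) ∈
          R100set e Z₁ d₁ d₂ d₃ r b₁ b₂ := by
      intro t ht0 ht1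
      rw [R100_mem e Z₁ d₁ d₂ d₃ r b₁ b₂ hd₁ hd₂ hd₃]
      set u : ℝ := (1 - t) * y + t * (-p) with hudef
      have hu1 : -p ≤ u := by nlinarith
      have hu2 : u ≤ y := by nlinarith
      have huP : u ^ 2 ≤ P := by nlinarith
      set q : ℝ := Real.sqrt (P - u ^ 2) with hqdef
      have hq2 : q ^ 2 = P - u ^ 2 := Real.sq_sqrt (by linarith)
      have hq0 : 0 ≤ q := Real.sqrt_nonneg _
      have hzq : (σ * q) ^ 2 = P - u ^ 2 := by
        rw [mul_pow, hσσ, one_mul, hq2]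
      refine ⟨by nlinarith, by nlinarith, by nlinarith⟩
    have := R100_joined_of_path hc hmem
    have e0 : (1 - (0:ℝ)) * y + 0 * (-p) = y := by ring
    have e1 : (1 - (1:ℝ)) * y + 1 * (-p) = -p := by ring
    have e0' : P - y ^ 2 = R := by rw [hPdef, hRdef]
    have e1' : P - p ^ 2 = 0 := by nlinarith
    simpa [e0, e1, e0', e1', hsdef] using this
  exact J1.trans J2

lemma R100_convex_lt {c A B t : ℝ} (hA : c < A) (hB : c < B) (h0 : 0 ≤ t) (h1 : t ≤ 1) :
    c < (1 - t) * A + t * B := by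
  rcases le_total t (1 / 2) with h | h
  · nlinarith
  · nlinarith

lemma R100_sq_le {a b : ℝ} (ha : 0 ≤ a) (hb : 0 ≤ b) (h : a ^ 2 ≤ b ^ 2) : a ≤ b := by
  nlinarith

lemma R100_aux_k1 {d x₀ x₁ : ℝ} (h0 : x₀ ^ 2 ≤ d ^ 2) (h1 : x₁ ^ 2 ≤ d ^ 2) :
    0 ≤ d ^ 2 - x₀ * x₁ := by
  nlinarith [sq_nonneg (x₀ - x₁)]

lemma R100_aux_k2 {d x₀ x₁ p₀ p₁ : ℝ} (hp₀ : 0 ≤ p₀) (hp₁ : 0 ≤ p₁)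
    (h₀ : p₀ ^ 2 = d ^ 2 - x₀ ^ 2) (h₁ : p₁ ^ 2 = d ^ 2 - x₁ ^ 2)
    (k1 : 0 ≤ d ^ 2 - x₀ * x₁) : p₀ * p₁ ≤ d ^ 2 - x₀ * x₁ := by
  nlinarith [mul_nonneg hp₀ hp₁, sq_nonneg (x₀ - x₁), sq_nonneg (p₀ - p₁), sq_nonneg (p₀ + p₁)]

lemma R100_aux_convexsq {d x₀ x₁ t : ℝ} (h0 : x₀ ^ 2 ≤ d ^ 2) (h1 : x₁ ^ 2 ≤ d ^ 2)
    (ht0 : 0 ≤ t) (ht1 : t ≤ 1) : ((1 - t) * x₀ + t * x₁) ^ 2 ≤ d ^ 2 := by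
  nlinarith [sq_nonneg (x₀ - x₁), mul_nonneg ht0 (by linarith : (0:ℝ) ≤ 1 - t)]

set_option maxHeartbeats 1600000 in
/-- Stage 3: two bottom points are joined along the bottom half-circle. -/
lemma R100_bottom_joined (e : OrthonormalBasis (Fin 3) ℝ E3) (Z₁ : E3) (d₁ d₂ d₃ r b₁ b₂ : ℝ)
    (hd₁ : 0 ≤ d₁) (hd₂ : 0 ≤ d₂) (hd₃ : 0 ≤ d₃) (hb₂ : 0 < b₂) {x₀ x₁ : ℝ}
    (h₀ : R100pt e Z₁ x₀ (-Real.sqrt (d₁ ^ 2 - x₀ ^ 2)) 0 ∈ R100set e Z₁ d₁ d₂ d₃ r b₁ b₂)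
    (h₁ : R100pt e Z₁ x₁ (-Real.sqrt (d₁ ^ 2 - x₁ ^ 2)) 0 ∈ R100set e Z₁ d₁ d₂ d₃ r b₁ b₂) :
    JoinedIn (R100set e Z₁ d₁ d₂ d₃ r b₁ b₂)
      (R100pt e Z₁ x₀ (-Real.sqrt (d₁ ^ 2 - x₀ ^ 2)) 0)
      (R100pt e Z₁ x₁ (-Real.sqrt (d₁ ^ 2 - x₁ ^ 2)) 0) := by
  rw [R100_mem e Z₁ d₁ d₂ d₃ r b₁ b₂ hd₁ hd₂ hd₃] at h₀ h₁
  set p₀ : ℝ := Real.sqrt (d₁ ^ 2 - x₀ ^ 2) with hp₀def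
  set p₁ : ℝ := Real.sqrt (d₁ ^ 2 - x₁ ^ 2) with hp₁def
  obtain ⟨h01, h02, h03⟩ := h₀
  obtain ⟨h11, h12, h13⟩ := h₁
  have hx₀ : x₀ ^ 2 ≤ d₁ ^ 2 := by linarith [sq_nonneg p₀, neg_sq p₀, sq_nonneg (0:ℝ)]
  have hx₁ : x₁ ^ 2 ≤ d₁ ^ 2 := by linarith [sq_nonneg p₁, neg_sq p₁, sq_nonneg (0:ℝ)]
  have hp₀2 : p₀ ^ 2 = d₁ ^ 2 - x₀ ^ 2 := Real.sq_sqrt (by linarith)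
  have hp₁2 : p₁ ^ 2 = d₁ ^ 2 - x₁ ^ 2 := Real.sq_sqrt (by linarith)
  have hp₀0 : 0 ≤ p₀ := Real.sqrt_nonneg _
  have hp₁0 : 0 ≤ p₁ := Real.sqrt_nonneg _
  have k1 : 0 ≤ d₁ ^ 2 - x₀ * x₁ := R100_aux_k1 hx₀ hx₁
  have k2 : p₀ * p₁ ≤ d₁ ^ 2 - x₀ * x₁ := R100_aux_k2 hp₀0 hp₁0 hp₀2 hp₁2 k1
  -- endpoint inequalities in linearized form
  have hC₀2 : d₂ ^ 2 < d₁ ^ 2 - 2 * r * x₀ + r ^ 2 := by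
    have expand : (x₀ - r) ^ 2 + (-p₀) ^ 2 + (0:ℝ) ^ 2 = d₁ ^ 2 - 2 * r * x₀ + r ^ 2 := by
      linear_combination hp₀2
    linarith [h02]
  have hC₁2 : d₂ ^ 2 < d₁ ^ 2 - 2 * r * x₁ + r ^ 2 := by
    have expand : (x₁ - r) ^ 2 + (-p₁) ^ 2 + (0:ℝ) ^ 2 = d₁ ^ 2 - 2 * r * x₁ + r ^ 2 := by
      linear_combination hp₁2
    linarith [h12]
  have hC₀3 : d₃ ^ 2 < d₁ ^ 2 + b₁ ^ 2 + b₂ ^ 2 - 2 * b₁ * x₀ + 2 * b₂ * p₀ := by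
    have expand : (x₀ - b₁) ^ 2 + (-p₀ - b₂) ^ 2 + (0:ℝ) ^ 2 =
        d₁ ^ 2 + b₁ ^ 2 + b₂ ^ 2 - 2 * b₁ * x₀ + 2 * b₂ * p₀ := by
      linear_combination hp₀2
    linarith [h03]
  have hC₁3 : d₃ ^ 2 < d₁ ^ 2 + b₁ ^ 2 + b₂ ^ 2 - 2 * b₁ * x₁ + 2 * b₂ * p₁ := by
    have expand : (x₁ - b₁) ^ 2 + (-p₁ - b₂) ^ 2 + (0:ℝ) ^ 2 =
        d₁ ^ 2 + b₁ ^ 2 + b₂ ^ 2 - 2 * b₁ * x₁ + 2 * b₂ * p₁ := by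
      linear_combination hp₁2
    linarith [h13]
  have hc : Continuous fun t : ℝ =>
      R100pt e Z₁ ((1 - t) * x₀ + t * x₁)
        (-Real.sqrt (d₁ ^ 2 - ((1 - t) * x₀ + t * x₁) ^ 2)) 0 :=
    R100pt_continuous e Z₁ (by fun_prop) (by fun_prop) continuous_const
  have hmem : ∀ t : ℝ, 0 ≤ t → t ≤ 1 →
      R100pt e Z₁ ((1 - t) * x₀ + t * x₁)
        (-Real.sqrt (d₁ ^ 2 - ((1 - t) * x₀ + t * x₁) ^ 2)) 0 ∈
        R100set e Z₁ d₁ d₂ d₃ r b₁ b₂ := by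
    intro t ht0 ht1
    rw [R100_mem e Z₁ d₁ d₂ d₃ r b₁ b₂ hd₁ hd₂ hd₃]
    set xt : ℝ := (1 - t) * x₀ + t * x₁ with hxtdef
    have hxt2 : xt ^ 2 ≤ d₁ ^ 2 := R100_aux_convexsq hx₀ hx₁ ht0 ht1
    set pt : ℝ := Real.sqrt (d₁ ^ 2 - xt ^ 2) with hptdef
    have hpt2 : pt ^ 2 = d₁ ^ 2 - xt ^ 2 := Real.sq_sqrt (by linarith)
    have hpt0 : 0 ≤ pt := Real.sqrt_nonneg _
    -- concavity : (1-t) p₀ + t p₁ ≤ pt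
    have h1t : (0:ℝ) ≤ 1 - t := by linarith
    have hμ0 : 0 ≤ (1 - t) * p₀ + t * p₁ := by
      have u1 := mul_nonneg h1t hp₀0
      have u2 := mul_nonneg ht0 hp₁0
      linarith
    have hK : 0 ≤ 2 * t * (1 - t) * ((d₁ ^ 2 - x₀ * x₁) - p₀ * p₁) := by
      have u1 := mul_nonneg (mul_nonneg (by linarith : (0:ℝ) ≤ 2 * t) h1t)
        (by linarith : (0:ℝ) ≤ (d₁ ^ 2 - x₀ * x₁) - p₀ * p₁)
      linarith
    have hdiff : pt ^ 2 - ((1 - t) * p₀ + t * p₁) ^ 2 =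
        2 * t * (1 - t) * ((d₁ ^ 2 - x₀ * x₁) - p₀ * p₁) := by
      rw [hpt2, hxtdef]
      linear_combination (-(1 - t) ^ 2) * hp₀2 + (-(t ^ 2)) * hp₁2
    have conc : (1 - t) * p₀ + t * p₁ ≤ pt :=
      R100_sq_le hμ0 hpt0 (by linarith)
    refine ⟨by linarith [neg_sq pt, sq_nonneg (0:ℝ), hpt2], ?_, ?_⟩
    · have expand : (xt - r) ^ 2 + (-pt) ^ 2 + (0:ℝ) ^ 2 =
          (1 - t) * (d₁ ^ 2 - 2 * r * x₀ + r ^ 2) + t * (d₁ ^ 2 - 2 * r * x₁ + r ^ 2) := by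
        rw [hxtdef] at hpt2 ⊢
        linear_combination hpt2
      rw [expand]
      exact R100_convex_lt hC₀2 hC₁2 ht0 ht1
    · have expand : (xt - b₁) ^ 2 + (-pt - b₂) ^ 2 + (0:ℝ) ^ 2 =
          (d₁ ^ 2 + b₁ ^ 2 + b₂ ^ 2) - 2 * b₁ * xt + 2 * b₂ * pt := by
        linear_combination hpt2
      have hcomb := R100_convex_lt hC₀3 hC₁3 ht0 ht1
      have hb : 2 * b₂ * ((1 - t) * p₀ + t * p₁) ≤ 2 * b₂ * pt :=
        mul_le_mul_of_nonneg_left conc (by linarith)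
      have lin : (1 - t) * (d₁ ^ 2 + b₁ ^ 2 + b₂ ^ 2 - 2 * b₁ * x₀ + 2 * b₂ * p₀) +
          t * (d₁ ^ 2 + b₁ ^ 2 + b₂ ^ 2 - 2 * b₁ * x₁ + 2 * b₂ * p₁) =
          (d₁ ^ 2 + b₁ ^ 2 + b₂ ^ 2) - 2 * b₁ * xt + 2 * b₂ * ((1 - t) * p₀ + t * p₁) := by
        rw [hxtdef]; ring
      rw [expand]
      linarith
  have := R100_joined_of_path hc hmem
  have e0 : (1 - (0:ℝ)) * x₀ + 0 * x₁ = x₀ := by ring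
  have e1 : (1 - (1:ℝ)) * x₀ + 1 * x₁ = x₁ := by ring
  simpa [e0, e1] using this

end R100Aux

set_option maxHeartbeats 1600000 in
/-- If `Z₁, Z₂, Z₃ ∈ ℝ³` are non-collinear, `d₁, d₂, d₃ ≥ 0`, `Dᵢ` is the closed ball
of radius `dᵢ` centered at `Zᵢ`, and `R₁₀₀` is the closure of `D₁ \ (D₂ ∪ D₃)`, then
`R₁₀₀` is connected whenever it is nonempty. -/
theorem R100_connected_3D
    (Z₁ Z₂ Z₃ : EuclideanSpace ℝ (Fin 3))
    (hZ : ¬ Collinear ℝ ({Z₁, Z₂, Z₃} : Set (EuclideanSpace ℝ (Fin 3))))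
    (d₁ d₂ d₃ : ℝ) (hd₁ : 0 ≤ d₁) (hd₂ : 0 ≤ d₂) (hd₃ : 0 ≤ d₃)
    (R₁₀₀ : Set (EuclideanSpace ℝ (Fin 3)))
    (hR : R₁₀₀ = closure
        (Metric.closedBall Z₁ d₁ \ (Metric.closedBall Z₂ d₂ ∪ Metric.closedBall Z₃ d₃)))
    (hne : R₁₀₀.Nonempty) :
    IsConnected R₁₀₀ := by
  have hne' : (Metric.closedBall Z₁ d₁ \
      (Metric.closedBall Z₂ d₂ ∪ Metric.closedBall Z₃ d₃)).Nonempty := by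
    rw [hR] at hne
    exact closure_nonempty_iff.mp hne
  have key : IsPathConnected (Metric.closedBall Z₁ d₁ \
      (Metric.closedBall Z₂ d₂ ∪ Metric.closedBall Z₃ d₃)) := by
    -- the difference vectors
    have hZ₂ : Z₂ - Z₁ ≠ 0 := by
      intro h
      apply hZ
      have h' : Z₂ = Z₁ := by rwa [sub_eq_zero] at h
      rw [h', Set.insert_comm, Set.insert_idem]
      exact collinear_pair ℝ Z₁ Z₃
    have hnab : ∀ c : ℝ, Z₃ - Z₁ ≠ c • (Z₂ - Z₁) := by
      intro c h
      apply hZ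
      rw [collinear_iff_exists_forall_eq_smul_vadd]
      refine ⟨Z₁, Z₂ - Z₁, ?_⟩
      intro p hp
      simp only [Set.mem_insert_iff, Set.mem_singleton_iff] at hp
      rcases hp with rfl | rfl | rfl
      · exact ⟨0, by simp⟩
      · exact ⟨1, by rw [vadd_eq_add, one_smul]; abel⟩
      · exact ⟨c, by rw [vadd_eq_add, ← h]; abel⟩
    -- orthonormal vectors adapted to the three centers
    have hr : (0:ℝ) < ‖Z₂ - Z₁‖ := norm_pos_iff.mpr hZ₂
    set u₁ : E3 := ‖Z₂ - Z₁‖⁻¹ • (Z₂ - Z₁) with hu₁def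
    have hu₁ : ‖u₁‖ = 1 := norm_smul_inv_norm hZ₂
    set c₁ : ℝ := ⟪u₁, Z₃ - Z₁⟫ with hc₁def
    set b' : E3 := (Z₃ - Z₁) - c₁ • u₁ with hb'def
    have hb' : b' ≠ 0 := by
      intro h
      apply hnab (c₁ * ‖Z₂ - Z₁‖⁻¹)
      have h' : Z₃ - Z₁ = c₁ • u₁ := by rwa [sub_eq_zero] at h
      rw [h', hu₁def, smul_smul]
    set u₂ : E3 := ‖b'‖⁻¹ • b' with hu₂def
    have hu₂ : ‖u₂‖ = 1 := norm_smul_inv_norm hb'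
    have hu₁u₁ : ⟪u₁, u₁⟫ = 1 := by
      rw [real_inner_self_eq_norm_sq, hu₁]; norm_num
    have h1b' : ⟪u₁, b'⟫ = 0 := by
      rw [hb'def, inner_sub_right, real_inner_smul_right, hu₁u₁, ← hc₁def]; ring
    have hu₁u₂ : ⟪u₁, u₂⟫ = 0 := by
      rw [hu₂def, real_inner_smul_right, h1b']; ring
    have hu₂u₁ : ⟪u₂, u₁⟫ = 0 := by rw [real_inner_comm, hu₁u₂]
    have hu₂u₂ : ⟪u₂, u₂⟫ = 1 := by
      rw [real_inner_self_eq_norm_sq, hu₂]; norm_num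
    -- extend to an orthonormal basis
    have horth : Orthonormal ℝ (({0, 1} : Set (Fin 3)).restrict ![u₁, u₂, (0:E3)]) := by
      rw [orthonormal_iff_ite]
      rintro ⟨i, hi⟩ ⟨j, hj⟩
      simp only [Set.mem_insert_iff, Set.mem_singleton_iff] at hi hj
      rcases hi with rfl | rfl <;> rcases hj with rfl | rfl <;>
        simp [Set.restrict, hu₁, hu₂, hu₁u₁, hu₁u₂, hu₂u₁, hu₂u₂, Subtype.ext_iff]
    obtain ⟨e, he⟩ := horth.exists_orthonormalBasis_extension_of_card_eq
      (by simp [finrank_euclideanSpace_fin])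
    have he0 : e 0 = u₁ := he 0 (by simp)
    have he1 : e 1 = u₂ := he 1 (by simp)
    -- express the centers in the frame
    have hru₁ : ‖Z₂ - Z₁‖ • u₁ = Z₂ - Z₁ := by
      rw [hu₁def, smul_smul, mul_inv_cancel₀ (ne_of_gt hr), one_smul]
    have hZ₂' : Z₂ = Z₁ + ‖Z₂ - Z₁‖ • e 0 := by
      rw [he0, hru₁]; abel
    have hb₂ : (0:ℝ) < ‖b'‖ := norm_pos_iff.mpr hb'
    have hb₂u₂ : ‖b'‖ • u₂ = b' := by
      rw [hu₂def, smul_smul, mul_inv_cancel₀ (ne_of_gt hb₂), one_smul]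
    have hZ₃' : Z₃ = Z₁ + (c₁ • e 0 + ‖b'‖ • e 1) := by
      rw [he0, he1, hb₂u₂, hb'def]; abel
    rw [hZ₂', hZ₃']
    show IsPathConnected (R100set e Z₁ d₁ d₂ d₃ ‖Z₂ - Z₁‖ c₁ ‖b'‖)
    rw [isPathConnected_iff]
    constructor
    · obtain ⟨w, hw⟩ := hne'
      rw [hZ₂', hZ₃'] at hw
      exact ⟨w, hw⟩
    · intro w hw w' hw'
      rw [hZ₂', hZ₃'] at hne'
      -- coordinates of w and w'
      have hsum := e.sum_repr' (w - Z₁)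
      rw [Fin.sum_univ_three] at hsum
      have hwpt : R100pt e Z₁ (⟪e 0, w - Z₁⟫) (⟪e 1, w - Z₁⟫) (⟪e 2, w - Z₁⟫) = w := by
        simp only [R100pt]
        rw [hsum]; abel
      have hsum' := e.sum_repr' (w' - Z₁)
      rw [Fin.sum_univ_three] at hsum'
      have hwpt' : R100pt e Z₁ (⟪e 0, w' - Z₁⟫) (⟪e 1, w' - Z₁⟫) (⟪e 2, w' - Z₁⟫) = w' := by
        simp only [R100pt]
        rw [hsum']; abel
      have Jw := R100_to_bottom e Z₁ d₁ d₂ d₃ ‖Z₂ - Z₁‖ c₁ ‖b'‖ hd₁ hd₂ hd₃ hb₂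
        (x := ⟪e 0, w - Z₁⟫) (y := ⟪e 1, w - Z₁⟫) (z := ⟪e 2, w - Z₁⟫)
        (by rw [hwpt]; exact hw)
      have Jw' := R100_to_bottom e Z₁ d₁ d₂ d₃ ‖Z₂ - Z₁‖ c₁ ‖b'‖ hd₁ hd₂ hd₃ hb₂
        (x := ⟪e 0, w' - Z₁⟫) (y := ⟪e 1, w' - Z₁⟫) (z := ⟪e 2, w' - Z₁⟫)
        (by rw [hwpt']; exact hw')
      have J3 := R100_bottom_joined e Z₁ d₁ d₂ d₃ ‖Z₂ - Z₁‖ c₁ ‖b'‖ hd₁ hd₂ hd₃ hb₂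
        Jw.target_mem Jw'.target_mem
      have hfinal := Jw.trans (J3.trans Jw'.symm)
      rw [hwpt, hwpt'] at hfinal
      exact hfinal
  rw [hR]
  exact key.isConnected.closure
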